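/- At most ⌊(2w+1)/3⌋ non-attacking brooks can be placed on a triangular board of width w: if S ⊆ {(x,y) ∈ ℤ² : 1 ≤ x, 1 ≤ y, x + y ≤ w+1} is such that the coordinate maps x, y, and x+y are each injective on S, then |S| ≤ ⌊(2w+1)/3⌋. -/
import Mathlib

lemma sum_lb (T : Finset ℤ) (h : ∀ a ∈ T, 1 ≤ a) :
    (T.card : ℤ) * (T.card + 1) ≤ 2 * ∑ a ∈ T, a := by
  induction T using Finset.strongInduction with
  | _ T ih =>
    rcases T.eq_empty_or_nonempty with rfl | hne
    · simp
    · have hm : T.max' hne ∈ T := T.max'_mem hne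
      set m := T.max' hne with hmdef
      have hm1 : 1 ≤ m := h m hm
      have hcard : (T.card : ℤ) ≤ m := by
        have hsub : T ⊆ Finset.Icc 1 m := fun a ha =>
          Finset.mem_Icc.mpr ⟨h a ha, T.le_max' a ha⟩
        have := Finset.card_le_card hsub
        rw [Int.card_Icc] at this
        have : (T.card : ℤ) ≤ ((m + 1 - 1).toNat : ℤ) := by exact_mod_cast this
        rwa [Int.toNat_of_nonneg (by omega), add_sub_cancel_right] at this
      have hsum : ∑ a ∈ T.erase m, a + m = ∑ a ∈ T, a := Finset.sum_erase_add T _ hm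
      have hih := ih (T.erase m) (Finset.erase_ssubset hm)
        (fun a ha => h a (Finset.mem_of_mem_erase ha))
      have hc : ((T.erase m).card : ℤ) = (T.card : ℤ) - 1 := by
        rw [Finset.card_erase_of_mem hm]
        have : 1 ≤ T.card := Finset.card_pos.mpr hne
        omega
      rw [hc] at hih
      nlinarith [Finset.card_pos.mpr hne]

/-- At most `⌊(2w+1)/3⌋` non-attacking brooks fit on a triangular board of width `w`. -/
theorem brooks_upper_bound (w : ℕ) (S : Finset (ℤ × ℤ))
    (hboard : ∀ p ∈ S, 1 ≤ p.1 ∧ 1 ≤ p.2 ∧ p.1 + p.2 ≤ (w : ℤ) + 1)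
    (hx : Set.InjOn (fun p : ℤ × ℤ => p.1) ↑S)
    (hy : Set.InjOn (fun p : ℤ × ℤ => p.2) ↑S)
    (hd : Set.InjOn (fun p : ℤ × ℤ => p.1 + p.2) ↑S) :
    S.card ≤ (2 * w + 1) / 3 := by
  set n := S.card with hn
  -- x-coordinates
  have hX : (n : ℤ) * (n + 1) ≤ 2 * ∑ p ∈ S, p.1 := by
    have := sum_lb (S.image (fun p => p.1))
      (by intro a ha; obtain ⟨p, hp, rfl⟩ := Finset.mem_image.mp ha; exact (hboard p hp).1)
    rwa [Finset.card_image_of_injOn hx, Finset.sum_image (fun p hp q hq => hx hp hq)] at this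
  have hY : (n : ℤ) * (n + 1) ≤ 2 * ∑ p ∈ S, p.2 := by
    have := sum_lb (S.image (fun p => p.2))
      (by intro a ha; obtain ⟨p, hp, rfl⟩ := Finset.mem_image.mp ha; exact (hboard p hp).2.1)
    rwa [Finset.card_image_of_injOn hy, Finset.sum_image (fun p hp q hq => hy hp hq)] at this
  -- diagonal sums, reflected
  have hD : (n : ℤ) * (n + 1) ≤ 2 * ∑ p ∈ S, ((w : ℤ) + 2 - (p.1 + p.2)) := by
    have hinj : Set.InjOn (fun p : ℤ × ℤ => (w : ℤ) + 2 - (p.1 + p.2)) ↑S := by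
      intro p hp q hq hpq
      apply hd hp hq
      simp only at hpq ⊢
      omega
    have := sum_lb (S.image (fun p => (w : ℤ) + 2 - (p.1 + p.2)))
      (by intro a ha; obtain ⟨p, hp, rfl⟩ := Finset.mem_image.mp ha
          have := (hboard p hp).2.2; omega)
    rwa [Finset.card_image_of_injOn hinj, Finset.sum_image (fun p hp q hq => hinj hp hq)] at this
  have hsplit : ∑ p ∈ S, ((w : ℤ) + 2 - (p.1 + p.2))
      = (n : ℤ) * ((w : ℤ) + 2) - (∑ p ∈ S, p.1 + ∑ p ∈ S, p.2) := by
    rw [Finset.sum_sub_distrib, Finset.sum_const, Finset.sum_add_distrib]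
    push_cast [hn]
    ring
  rw [hsplit] at hD
  have key : 3 * n ≤ 2 * w + 1 := by
    rcases Nat.eq_zero_or_pos n with h0 | hpos
    · omega
    · have hpos' : (1 : ℤ) ≤ (n : ℤ) := by exact_mod_cast hpos
      nlinarith
  omega
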